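/- Along the perpendicular bisector of the centers of two circular uncertain objects, the nearest-neighbor probability tends to 1/2 at infinity: let o₁ = B̄(c₁,r₁) and o₂ = B̄(c₂,r₂) be closed disks in the plane with r₁, r₂ > 0 and c₁ ≠ c₂, and let p(x) = (U(c₁,r₁) ⊗ U(c₂,r₂)) {(u,v) | dist(u,x) < dist(v,x)}. Then p(x) → 1/2 as x tends to infinity along the set L = {x | dist(x,c₁) = dist(x,c₂)}; formally, the function p tends to 1/2 along the filter (cocompact filter on the plane) ⊓ (principal filter of L). -/

import Mathlib

open MeasureTheory
open scoped ENNReal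

/-- The uniform probability measure on the closed ball of center `c` and radius `r`
in the Euclidean plane. -/
noncomputable def unifBall (c : EuclideanSpace ℝ (Fin 2)) (r : ℝ) :
    Measure (EuclideanSpace ℝ (Fin 2)) :=
  (volume (Metric.closedBall c r))⁻¹ • volume.restrict (Metric.closedBall c r)

open Filter

local notation "E2" => EuclideanSpace ℝ (Fin 2)

/-- rotation by 90 degrees -/
noncomputable def perpVec (w : E2) : E2 := (WithLp.equiv 2 (Fin 2 → ℝ)).symm ![-(w 1), w 0]

lemma inner_self_coord {w : E2} (hw : w ≠ 0) : w 0 * w 0 + w 1 * w 1 ≠ 0 := by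
  intro h
  apply hw
  have h0 : w 0 = 0 := by nlinarith [sq_nonneg (w 0), sq_nonneg (w 1)]
  have h1 : w 1 = 0 := by nlinarith [sq_nonneg (w 0), sq_nonneg (w 1)]
  ext i; fin_cases i <;> simp [h0, h1]

lemma inner_perpVec_left (w : E2) : (inner ℝ (perpVec w) w : ℝ) = 0 := by
  simp [PiLp.inner_apply, Fin.sum_univ_two, perpVec]; ring

lemma inner_perpVec_self (w : E2) : (inner ℝ (perpVec w) (perpVec w) : ℝ) = inner ℝ w w := by
  rw [PiLp.inner_apply, PiLp.inner_apply]
  simp [ Fin.sum_univ_two, perpVec]; ring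

lemma perpVec_complete (w z : E2) (hw : w ≠ 0) (h : (inner ℝ z w : ℝ) = 0) :
    z = ((inner ℝ z (perpVec w) : ℝ) / (inner ℝ w w : ℝ)) • perpVec w := by
  have hww := inner_self_coord hw
  have hww' : w 0 ^ 2 + w 1 ^ 2 ≠ 0 := by rw [pow_two, pow_two]; exact hww
  simp only [PiLp.inner_apply, RCLike.inner_apply, starRingEnd_apply, star_trivial,
    Fin.sum_univ_two] at h ⊢
  ext i
  fin_cases i <;>
  · simp [perpVec, PiLp.smul_apply]
    field_simp
    first
    | linear_combination (w 0) * h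
    | linear_combination (w 1) * h

lemma unifBall_isProb (c : E2) {r : ℝ} (hr : 0 < r) : IsProbabilityMeasure (unifBall c r) := by
  constructor
  rw [unifBall, Measure.smul_apply, Measure.restrict_apply MeasurableSet.univ,
    Set.univ_inter, smul_eq_mul]
  exact ENNReal.inv_mul_cancel (Metric.measure_closedBall_pos _ _ hr).ne'
    measure_closedBall_lt_top.ne

lemma hyperplane_null (v : E2) (hv : v ≠ 0) (t : ℝ) :
    volume {z : E2 | (inner ℝ z v : ℝ) = t} = 0 := by
  set K := LinearMap.ker (innerₛₗ ℝ v) with hK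
  have hvv : (inner ℝ v v : ℝ) ≠ 0 := inner_self_ne_zero.2 hv
  have hKtop : K ≠ ⊤ := by
    intro h
    have : v ∈ K := h ▸ Submodule.mem_top
    exact hvv (by simpa [hK, LinearMap.mem_ker] using this)
  have hKnull : volume (K : Set E2) = 0 := Measure.addHaar_submodule _ _ hKtop
  have hs : {z : E2 | (inner ℝ z v : ℝ) = t}
      = (fun z => z + (-((t / (inner ℝ v v : ℝ)) • v))) ⁻¹' (K : Set E2) := by
    ext z
    simp only [Set.mem_setOf_eq, Set.mem_preimage, SetLike.mem_coe, hK, LinearMap.mem_ker,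
      innerₛₗ_apply_apply, inner_add_right, inner_neg_right, inner_smul_right, real_inner_comm z v]
    rw [div_mul_cancel₀ _ hvv]
    constructor <;> intro h <;> linarith
  rw [hs, measure_preimage_add_right]
  exact hKnull

lemma unifBall_null_of_volume_null (c : E2) (r : ℝ) {s : Set E2} (hs : volume s = 0) :
    unifBall c r s = 0 := by
  rw [unifBall, Measure.smul_apply, smul_eq_mul]
  have : volume.restrict (Metric.closedBall c r) s = 0 :=
    le_antisymm (le_trans (Measure.restrict_le_self s) hs.le) zero_le
  rw [this, mul_zero]

lemma reflect_measurePreserving (c : E2) (r : ℝ) :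
    MeasurePreserving (fun u : E2 => c + c - u) (unifBall c r) (unifBall c r) := by
  have hmeas : Measurable (fun u : E2 => c + c - u) := measurable_const.sub measurable_id
  have hinv : ∀ u, (fun u : E2 => c + c - u) ((fun u : E2 => c + c - u) u) = u := by
    intro u; exact sub_sub_cancel _ _
  have himg : (fun u : E2 => c + c - u) ⁻¹' (Metric.closedBall c r) = Metric.closedBall c r := by
    ext u
    simp only [Set.mem_preimage, Metric.mem_closedBall, dist_eq_norm]
    have : ‖c + c - u - c‖ = ‖u - c‖ := by
      rw [show c + c - u - c = -(u - c) by abel, norm_neg]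
    rw [this]
  have hvol : Measure.map (fun u : E2 => c + c - u) volume = volume := by
    have hcomp : (fun u : E2 => c + c - u) = (fun u : E2 => (c + c) + u) ∘ Neg.neg := by
      ext u; simp [sub_eq_add_neg]
    rw [hcomp, ← Measure.map_map (measurable_const_add _) measurable_neg,
      Measure.map_neg_eq_self, map_add_left_eq_self]
  have hemb : MeasurableEmbedding (fun u : E2 => c + c - u) :=
    Homeomorph.measurableEmbedding
      { toFun := fun u => c + c - u
        invFun := fun u => c + c - u
        left_inv := hinv
        right_inv := hinv
        continuous_toFun := by continuity
        continuous_invFun := by continuity }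
  refine ⟨hmeas, ?_⟩
  rw [unifBall, Measure.map_smul]
  conv_lhs => rw [show Metric.closedBall c r
    = (fun u : E2 => c + c - u) ⁻¹' (Metric.closedBall c r) from himg.symm]
  rw [← hemb.restrict_map, hvol, himg]

set_option maxHeartbeats 1000000 in
theorem prob_tendsto_half_along_perpendicular_bisector
    (c₁ c₂ : EuclideanSpace ℝ (Fin 2)) (r₁ r₂ : ℝ)
    (hr₁ : 0 < r₁) (hr₂ : 0 < r₂) (hc : c₁ ≠ c₂) :
    Filter.Tendsto
      (fun x : EuclideanSpace ℝ (Fin 2) =>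
        ((unifBall c₁ r₁).prod (unifBall c₂ r₂))
          {uv : EuclideanSpace ℝ (Fin 2) × EuclideanSpace ℝ (Fin 2) |
            dist uv.1 x < dist uv.2 x})
      (Filter.cocompact (EuclideanSpace ℝ (Fin 2)) ⊓
        Filter.principal {x : EuclideanSpace ℝ (Fin 2) | dist x c₁ = dist x c₂})
      (nhds (1 / 2)) := by
  haveI : (Filter.cocompact E2).IsCountablyGenerated := by
    rw [← Metric.cobounded_eq_cocompact, ← comap_norm_atTop]
    infer_instance
  set μ := unifBall c₁ r₁ with hμ
  set ν := unifBall c₂ r₂ with hν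
  haveI : IsProbabilityMeasure μ := unifBall_isProb c₁ hr₁
  haveI : IsProbabilityMeasure ν := unifBall_isProb c₂ hr₂
  set w : E2 := c₂ - c₁ with hwdef
  have hw : w ≠ 0 := sub_ne_zero.2 (Ne.symm hc)
  have hnw : ‖w‖ ≠ 0 := norm_ne_zero_iff.2 hw
  set e : E2 := ‖w‖⁻¹ • perpVec w with hedef
  have hwwnorm : (inner ℝ w w : ℝ) = ‖w‖ ^ 2 := real_inner_self_eq_norm_sq w
  have hee : (inner ℝ e e : ℝ) = 1 := by
    rw [hedef, real_inner_smul_left, real_inner_smul_right, inner_perpVec_self, hwwnorm]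
    field_simp
  have he0 : e ≠ 0 := by
    intro h
    rw [h, inner_zero_left] at hee
    norm_num at hee
  have hne : ‖e‖ = 1 := by
    have h2 : ‖e‖ ^ 2 = 1 ^ 2 := by
      rw [← real_inner_self_eq_norm_sq, hee]; norm_num
    exact (sq_eq_sq₀ (norm_nonneg e) zero_le_one).1 h2
  have hew : (inner ℝ e w : ℝ) = 0 := by
    rw [hedef, real_inner_smul_left, inner_perpVec_left, mul_zero]
  set m : E2 := (2 : ℝ)⁻¹ • (c₁ + c₂) with hmdef
  -- membership in the bisector
  have hbis : ∀ x : E2, dist x c₁ = dist x c₂ → (inner ℝ (x - m) w : ℝ) = 0 := by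
    intro x hx
    have h2 : (x 0 - c₁ 0) ^ 2 + (x 1 - c₁ 1) ^ 2 = (x 0 - c₂ 0) ^ 2 + (x 1 - c₂ 1) ^ 2 := by
      have h1 := congrArg (fun y : ℝ => y ^ 2) hx
      simp only [EuclideanSpace.dist_eq, Fin.sum_univ_two] at h1
      rw [Real.sq_sqrt (by positivity), Real.sq_sqrt (by positivity)] at h1
      simpa [Real.dist_eq, sq_abs] using h1
    simp only [hwdef, hmdef, PiLp.inner_apply, RCLike.inner_apply, starRingEnd_apply,
      star_trivial, Fin.sum_univ_two, PiLp.sub_apply, PiLp.smul_apply, PiLp.add_apply,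
      smul_eq_mul]
    linear_combination h2 / 2
  -- decomposition along the bisector
  have hdecomp : ∀ x : E2, dist x c₁ = dist x c₂ →
      x - m = (inner ℝ (x - m) e : ℝ) • e := by
    intro x hx
    have hz := perpVec_complete w (x - m) hw (hbis x hx)
    rw [hedef, real_inner_smul_right, smul_smul]
    rw [show ‖w‖⁻¹ * (inner ℝ (x - m) (perpVec w) : ℝ) * ‖w‖⁻¹
      = (inner ℝ (x - m) (perpVec w) : ℝ) / (inner ℝ w w : ℝ) by
        rw [hwwnorm, pow_two, div_eq_mul_inv, mul_inv]; ring]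
    exact hz
  -- the limit sets
  set Apos : Set (E2 × E2) := {uv | 0 < (inner ℝ (uv.1 - uv.2) e : ℝ)} with hApos
  set Aneg : Set (E2 × E2) := {uv | (inner ℝ (uv.1 - uv.2) e : ℝ) < 0} with hAneg
  have hinner_cont : Continuous (fun uv : E2 × E2 => (inner ℝ (uv.1 - uv.2) e : ℝ)) :=
    (continuous_fst.sub continuous_snd).inner continuous_const
  have hAposm : MeasurableSet Apos :=
    measurableSet_lt measurable_const hinner_cont.measurable
  have hAnegm : MeasurableSet Aneg :=
    measurableSet_lt hinner_cont.measurable measurable_const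
  -- null diagonal
  have hdiag : (μ.prod ν) {uv : E2 × E2 | (inner ℝ (uv.1 - uv.2) e : ℝ) = 0} = 0 := by
    have hm : MeasurableSet {uv : E2 × E2 | (inner ℝ (uv.1 - uv.2) e : ℝ) = 0} :=
      measurableSet_eq_fun hinner_cont.measurable measurable_const
    rw [Measure.prod_apply hm]
    have : ∀ u : E2, ν (Prod.mk u ⁻¹' {uv : E2 × E2 | (inner ℝ (uv.1 - uv.2) e : ℝ) = 0}) = 0 := by
      intro u
      have hset : Prod.mk u ⁻¹' {uv : E2 × E2 | (inner ℝ (uv.1 - uv.2) e : ℝ) = 0}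
          = {v : E2 | (inner ℝ v e : ℝ) = (inner ℝ u e : ℝ)} := by
        ext v
        simp only [Set.mem_preimage, Set.mem_setOf_eq, inner_sub_left]
        constructor <;> intro h <;> linarith
      rw [hset, hν]
      exact unifBall_null_of_volume_null _ _ (hyperplane_null e he0 _)
    simp only [this]
    exact lintegral_zero
  -- symmetry: reflection through the centers
  have hcce : (inner ℝ (c₁ + c₁ - (c₂ + c₂)) e : ℝ) = 0 := by
    have : c₁ + c₁ - (c₂ + c₂) = -(2 : ℝ) • w := by
      rw [hwdef]; module
    rw [this, real_inner_smul_left, real_inner_comm, hew, mul_zero]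
  have hsym : (μ.prod ν) Apos = (μ.prod ν) Aneg := by
    have hT : MeasurePreserving
        (Prod.map (fun u : E2 => c₁ + c₁ - u) (fun v : E2 => c₂ + c₂ - v)) (μ.prod ν) (μ.prod ν) :=
      (reflect_measurePreserving c₁ r₁).prod (reflect_measurePreserving c₂ r₂)
    have hpre : Prod.map (fun u : E2 => c₁ + c₁ - u) (fun v : E2 => c₂ + c₂ - v) ⁻¹' Apos
        = Aneg := by
      ext ⟨u, v⟩
      have hval : (inner ℝ ((c₁ + c₁ - u) - (c₂ + c₂ - v)) e : ℝ) = -(inner ℝ (u - v) e : ℝ) := by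
        have h1 : (c₁ + c₁ - u) - (c₂ + c₂ - v) = (c₁ + c₁ - (c₂ + c₂)) - (u - v) := by abel
        rw [h1, inner_sub_left, hcce]
        ring
      simp only [hApos, hAneg, Set.mem_preimage, Prod.map_apply, Set.mem_setOf_eq, hval]
      exact neg_pos
    calc (μ.prod ν) Apos
        = (μ.prod ν) (Prod.map (fun u : E2 => c₁ + c₁ - u) (fun v : E2 => c₂ + c₂ - v) ⁻¹' Apos) :=
          (hT.measure_preimage hAposm.nullMeasurableSet).symm
      _ = (μ.prod ν) Aneg := by rw [hpre]
  -- each has measure 1/2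
  have hone : (μ.prod ν) Apos + (μ.prod ν) Aneg = 1 := by
    have hdisj : Disjoint Apos Aneg := by
      rw [Set.disjoint_left]
      intro uv h1 h2
      rw [hApos, Set.mem_setOf_eq] at h1
      rw [hAneg, Set.mem_setOf_eq] at h2
      linarith
    rw [← measure_union hdisj hAnegm]
    have hcover : Set.univ ⊆ (Apos ∪ Aneg) ∪ {uv : E2 × E2 | (inner ℝ (uv.1 - uv.2) e : ℝ) = 0} := by
      intro uv _
      rcases lt_trichotomy (inner ℝ (uv.1 - uv.2) e : ℝ) 0 with h | h | h
      · exact Or.inl (Or.inr h)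
      · exact Or.inr h
      · exact Or.inl (Or.inl h)
    have h1 : (1 : ℝ≥0∞) ≤ (μ.prod ν) (Apos ∪ Aneg) := by
      calc (1 : ℝ≥0∞) = (μ.prod ν) Set.univ := (measure_univ).symm
        _ ≤ (μ.prod ν) ((Apos ∪ Aneg) ∪ {uv : E2 × E2 | (inner ℝ (uv.1 - uv.2) e : ℝ) = 0}) :=
          measure_mono hcover
        _ ≤ (μ.prod ν) (Apos ∪ Aneg) + (μ.prod ν) {uv : E2 × E2 | (inner ℝ (uv.1 - uv.2) e : ℝ) = 0} :=
          measure_union_le _ _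
        _ = (μ.prod ν) (Apos ∪ Aneg) := by rw [hdiag, add_zero]
    exact le_antisymm prob_le_one h1
  have hhalfpos : (μ.prod ν) Apos = 1 / 2 := by
    have hsum : (μ.prod ν) Apos + (μ.prod ν) Apos = 1 := by
      nth_rewrite 2 [hsym]
      exact hone
    rw [ENNReal.eq_div_iff (by norm_num) (by norm_num), two_mul, hsum]
  have hhalfneg : (μ.prod ν) Aneg = 1 / 2 := by rw [← hsym, hhalfpos]
  -- measurability of the events
  have hAx : ∀ x : E2, MeasurableSet {uv : E2 × E2 | dist uv.1 x < dist uv.2 x} := by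
    intro x
    exact measurableSet_lt (continuous_fst.dist continuous_const).measurable
      (continuous_snd.dist continuous_const).measurable
  -- key geometric estimate, generalized direction ε
  have hkeyGen : ∀ ε : E2, ‖ε‖ = 1 →
      (∀ x : E2, dist x c₁ = dist x c₂ → x - m = (inner ℝ (x - m) ε : ℝ) • ε) →
      ∀ u v x : E2, dist x c₁ = dist x c₂ → 0 ≤ (inner ℝ (x - m) ε : ℝ) →
      ‖u - m‖ ^ 2 - ‖v - m‖ ^ 2 < 2 * (inner ℝ (u - v) ε : ℝ) * ‖x - m‖ →
      dist u x < dist v x := by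
    intro ε hnε hdec u v x hxL hxpos hfar
    set t : ℝ := (inner ℝ (x - m) ε : ℝ) with htdef
    have hxm : x - m = t • ε := hdec x hxL
    have hnorm_xm : ‖x - m‖ = t := by
      rw [hxm, norm_smul, hnε, mul_one, Real.norm_eq_abs, abs_of_nonneg hxpos]
    have hux : u - x = (u - m) - t • ε := by rw [← hxm]; abel
    have hvx : v - x = (v - m) - t • ε := by rw [← hxm]; abel
    have hu2 : dist u x ^ 2 = ‖u - m‖ ^ 2 - 2 * (t * (inner ℝ (u - m) ε : ℝ)) + t ^ 2 := by
      rw [dist_eq_norm, hux, norm_sub_sq_real, real_inner_smul_right, norm_smul, hnε,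
        Real.norm_eq_abs, mul_one, sq_abs]
      try ring
    have hv2 : dist v x ^ 2 = ‖v - m‖ ^ 2 - 2 * (t * (inner ℝ (v - m) ε : ℝ)) + t ^ 2 := by
      rw [dist_eq_norm, hvx, norm_sub_sq_real, real_inner_smul_right, norm_smul, hnε,
        Real.norm_eq_abs, mul_one, sq_abs]
      try ring
    have hinner_sub : (inner ℝ (u - m) ε : ℝ) - (inner ℝ (v - m) ε : ℝ)
        = (inner ℝ (u - v) ε : ℝ) := by
      rw [← inner_sub_left]
      congr 1
      abel
    have hsq : dist u x ^ 2 < dist v x ^ 2 := by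
      rw [hu2, hv2]
      rw [hnorm_xm] at hfar
      nlinarith [hfar, hinner_sub]
    by_contra hcon
    push_neg at hcon
    exact absurd hsq (by nlinarith [dist_nonneg (x := v) (y := x), hcon])
  -- filters
  set F : Filter E2 := Filter.cocompact E2 ⊓
    Filter.principal {x : E2 | dist x c₁ = dist x c₂} with hF
  set Gpos : Filter E2 := F ⊓ Filter.principal {x : E2 | 0 ≤ (inner ℝ (x - m) e : ℝ)} with hGpos
  set Gneg : Filter E2 := F ⊓ Filter.principal {x : E2 | 0 ≤ (inner ℝ (x - m) (-e) : ℝ)} with hGneg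
  have hFle : F ≤ Gpos ⊔ Gneg := by
    intro s hs
    rw [Filter.mem_sup] at hs
    obtain ⟨h1, h2⟩ := hs
    rw [hGpos, Filter.mem_inf_principal] at h1
    rw [hGneg, Filter.mem_inf_principal] at h2
    have := Filter.inter_mem h1 h2
    apply Filter.mem_of_superset this
    intro x hx
    rcases le_total 0 (inner ℝ (x - m) e : ℝ) with h | h
    · exact hx.1 h
    · refine hx.2 ?_
      simp only [Set.mem_setOf_eq, inner_neg_right]
      linarith
  -- eventual facts
  have hevL : ∀ᶠ x in F, dist x c₁ = dist x c₂ :=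
    Filter.mem_inf_of_right (Filter.mem_principal_self _)
  have hevFar : ∀ C : ℝ, ∀ᶠ x in F, C < ‖x - m‖ := by
    intro C
    have hmem : (Metric.closedBall m C)ᶜ ∈ Filter.cocompact E2 :=
      Filter.mem_cocompact.2 ⟨Metric.closedBall m C, isCompact_closedBall m C, subset_rfl⟩
    have : (Metric.closedBall m C)ᶜ ∈ F := Filter.mem_inf_of_left hmem
    filter_upwards [this] with x hx
    simp only [Set.mem_compl_iff, Metric.mem_closedBall, dist_eq_norm, not_le] at hx
    exact hx
  -- pointwise limit, generalized
  have hlimGen : ∀ ε : E2, ‖ε‖ = 1 →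
      (∀ x : E2, dist x c₁ = dist x c₂ → x - m = (inner ℝ (x - m) ε : ℝ) • ε) →
      ∀ (G : Filter E2), G ≤ F → G ≤ Filter.principal {x : E2 | 0 ≤ (inner ℝ (x - m) ε : ℝ)} →
      ∀ uv : E2 × E2, (inner ℝ (uv.1 - uv.2) ε : ℝ) ≠ 0 →
      Filter.Tendsto (fun x : E2 =>
        ({uv : E2 × E2 | dist uv.1 x < dist uv.2 x}).indicator
          (fun _ => (1 : ℝ≥0∞)) uv) G
        (nhds (({uv : E2 × E2 | 0 < (inner ℝ (uv.1 - uv.2) ε : ℝ)}).indicator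
          (fun _ => (1 : ℝ≥0∞)) uv)) := by
    intro ε hnε hdec G hGF hGP uv ha
    obtain ⟨u, v⟩ := uv
    simp only at ha ⊢
    have hevLG : ∀ᶠ x in G, dist x c₁ = dist x c₂ := hGF hevL
    have hevP : ∀ᶠ x in G, 0 ≤ (inner ℝ (x - m) ε : ℝ) := hGP (Filter.mem_principal_self _)
    rcases ha.lt_or_gt with hneg | hpos
    · -- inner ℝ < 0 : eventually not in the set, indicator → 0
      have hval : ({uv : E2 × E2 | 0 < (inner ℝ (uv.1 - uv.2) ε : ℝ)}).indicator
          (fun _ => (1 : ℝ≥0∞)) (u, v) = 0 := by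
        apply Set.indicator_of_notMem
        simp only [Set.mem_setOf_eq, not_lt]
        exact hneg.le
      rw [hval]
      have hvu : (0:ℝ) < (inner ℝ (v - u) ε : ℝ) := by
        have : (inner ℝ (v - u) ε : ℝ) = -(inner ℝ (u - v) ε : ℝ) := by
          rw [← inner_neg_left]; congr 1; abel
        rw [this]; linarith
      set C : ℝ := max 0 ((‖v - m‖ ^ 2 - ‖u - m‖ ^ 2) / (2 * (inner ℝ (v - u) ε : ℝ)))
      have hevFarG : ∀ᶠ x in G, C < ‖x - m‖ := hGF (hevFar C)
      have hev : ∀ᶠ x in G,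
          ({uv : E2 × E2 | dist uv.1 x < dist uv.2 x}).indicator
            (fun _ => (1 : ℝ≥0∞)) (u, v) = 0 := by
        filter_upwards [hevLG, hevP, hevFarG] with x h1 h2 h3
        apply Set.indicator_of_notMem
        simp only [Set.mem_setOf_eq, not_lt]
        have : dist v x < dist u x := by
          apply hkeyGen ε hnε hdec v u x h1 h2
          have hC : (‖v - m‖ ^ 2 - ‖u - m‖ ^ 2) / (2 * (inner ℝ (v - u) ε : ℝ)) < ‖x - m‖ :=
            lt_of_le_of_lt (le_max_right _ _) h3
          rw [div_lt_iff₀ (by linarith)] at hC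
          linarith
        exact this.le
      exact Filter.Tendsto.congr' (Filter.EventuallyEq.symm hev) tendsto_const_nhds
    · -- inner ℝ > 0 : eventually in the set, indicator → 1
      have hval : ({uv : E2 × E2 | 0 < (inner ℝ (uv.1 - uv.2) ε : ℝ)}).indicator
          (fun _ => (1 : ℝ≥0∞)) (u, v) = 1 := by
        apply Set.indicator_of_mem
        exact hpos
      rw [hval]
      set C : ℝ := max 0 ((‖u - m‖ ^ 2 - ‖v - m‖ ^ 2) / (2 * (inner ℝ (u - v) ε : ℝ)))
      have hevFarG : ∀ᶠ x in G, C < ‖x - m‖ := hGF (hevFar C)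
      have hev : ∀ᶠ x in G,
          ({uv : E2 × E2 | dist uv.1 x < dist uv.2 x}).indicator
            (fun _ => (1 : ℝ≥0∞)) (u, v) = 1 := by
        filter_upwards [hevLG, hevP, hevFarG] with x h1 h2 h3
        apply Set.indicator_of_mem
        simp only [Set.mem_setOf_eq]
        apply hkeyGen ε hnε hdec u v x h1 h2
        have hC : (‖u - m‖ ^ 2 - ‖v - m‖ ^ 2) / (2 * (inner ℝ (u - v) ε : ℝ)) < ‖x - m‖ :=
          lt_of_le_of_lt (le_max_right _ _) h3
        rw [div_lt_iff₀ (by linarith)] at hC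
        linarith
      exact Filter.Tendsto.congr' (Filter.EventuallyEq.symm hev) tendsto_const_nhds
  -- tendsto on each branch via dominated convergence
  have hbranch : ∀ (G : Filter E2), G.IsCountablyGenerated → ∀ (A : Set (E2 × E2)),
      MeasurableSet A → (μ.prod ν) A = 1 / 2 →
      (∀ uv : E2 × E2, (inner ℝ (uv.1 - uv.2) e : ℝ) ≠ 0 →
        Filter.Tendsto (fun x : E2 =>
          ({uv : E2 × E2 | dist uv.1 x < dist uv.2 x}).indicator
            (fun _ => (1 : ℝ≥0∞)) uv) G
          (nhds (A.indicator (fun _ => (1 : ℝ≥0∞)) uv))) →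
      Filter.Tendsto (fun x : E2 => (μ.prod ν) {uv : E2 × E2 | dist uv.1 x < dist uv.2 x})
        G (nhds (1 / 2)) := by
    intro G hGcg A hAm hAval hlim
    haveI := hGcg
    have heq : ∀ x : E2, (μ.prod ν) {uv : E2 × E2 | dist uv.1 x < dist uv.2 x}
        = ∫⁻ uv, ({uv : E2 × E2 | dist uv.1 x < dist uv.2 x}).indicator
            (fun _ => (1 : ℝ≥0∞)) uv ∂(μ.prod ν) := by
      intro x
      exact (lintegral_indicator_one (hAx x)).symm
    simp only [heq]
    have hval : ∫⁻ uv, A.indicator (fun _ => (1 : ℝ≥0∞)) uv ∂(μ.prod ν) = 1 / 2 :=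
      (lintegral_indicator_one hAm).trans hAval
    rw [← hval]
    refine tendsto_lintegral_filter_of_dominated_convergence (fun _ => (1 : ℝ≥0∞))
      ?_ ?_ ?_ ?_
    · exact Filter.Eventually.of_forall fun x => (measurable_one).indicator (hAx x)
    · refine Filter.Eventually.of_forall fun x => ae_of_all _ fun uv => ?_
      classical
      by_cases h : uv ∈ {uv : E2 × E2 | dist uv.1 x < dist uv.2 x} <;>
        simp [Set.indicator_apply, h]
    · simp
    · have hae : ∀ᵐ uv ∂(μ.prod ν), (inner ℝ (uv.1 - uv.2) e : ℝ) ≠ 0 := by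
        rw [ae_iff]
        simpa using hdiag
      filter_upwards [hae] with uv huv
      exact hlim uv huv
  -- conclude
  have hdecneg : ∀ x : E2, dist x c₁ = dist x c₂ →
      x - m = (inner ℝ (x - m) (-e) : ℝ) • (-e) := by
    intro x hx
    rw [inner_neg_right, smul_neg, neg_smul, neg_neg]
    exact hdecomp x hx
  have hAnegEq : {uv : E2 × E2 | 0 < (inner ℝ (uv.1 - uv.2) (-e) : ℝ)} = Aneg := by
    ext uv
    simp only [Set.mem_setOf_eq, inner_neg_right, hAneg]
    constructor <;> intro h <;> linarith
  have htpos : Filter.Tendsto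
      (fun x : E2 => (μ.prod ν) {uv : E2 × E2 | dist uv.1 x < dist uv.2 x})
      Gpos (nhds (1 / 2)) := by
    refine hbranch Gpos inferInstance Apos hAposm hhalfpos ?_
    intro uv ha
    have := hlimGen e hne hdecomp Gpos inf_le_left inf_le_right uv ha
    convert this using 3
  have htneg : Filter.Tendsto
      (fun x : E2 => (μ.prod ν) {uv : E2 × E2 | dist uv.1 x < dist uv.2 x})
      Gneg (nhds (1 / 2)) := by
    refine hbranch Gneg inferInstance Aneg hAnegm hhalfneg ?_
    intro uv ha
    have ha' : (inner ℝ (uv.1 - uv.2) (-e) : ℝ) ≠ 0 := by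
      rw [inner_neg_right]
      exact neg_ne_zero.2 ha
    have := hlimGen (-e) (by rw [norm_neg, hne]) hdecneg Gneg inf_le_left
      inf_le_right uv ha'
    rw [hAnegEq] at this
    exact this
  exact Filter.Tendsto.mono_left (Filter.tendsto_sup.2 ⟨htpos, htneg⟩) hFle
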